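/- Let X be an affine GL-scheme. Then the orbit space X^orb (the set of generalized orbits with the quotient topology) is a spectral topological space: it is sober, its quasi-compact open subsets form a basis, and the intersection of any two quasi-compact opens is quasi-compact. -/

import Mathlib

open TensorProduct PiTensorProduct

noncomputable section

/-- `𝐕 = ⋃ₙ Kⁿ`, the standard representation of the infinite general linear group:
the `K`-vector space with countable basis `e 0, e 1, e 2, …`. -/
abbrev Vec (K : Type) [Field K] : Type := ℕ →₀ K

/-- The `i`-th standard basis vector of `𝐕`. -/
def ee (K : Type) [Field K] (i : ℕ) : Vec K := Finsupp.single i 1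

/-- The infinite general linear group `GL = ⋃ₙ GLₙ(K)`, realized as the set of linear
automorphisms of `𝐕` which, for some `N`, fix all basis vectors `e i` with `i ≥ N` and
preserve the span of `e 0, …, e (N-1)`. -/
def GLSet (K : Type) [Field K] : Set (Vec K ≃ₗ[K] Vec K) :=
  {g | ∃ N : ℕ,
    (∀ i, N ≤ i → g (ee K i) = ee K i ∧ g.symm (ee K i) = ee K i) ∧
    (∀ i, i < N → ((g (ee K i)).support : Set ℕ) ⊆ Set.Iio N ∧
      ((g.symm (ee K i)).support : Set ℕ) ⊆ Set.Iio N)}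

/-- The subgroup `GLₙ(K) ⊆ GL`: elements of `GL` witnessed by the given `N`. -/
def GLn (K : Type) [Field K] (N : ℕ) : Set (Vec K ≃ₗ[K] Vec K) :=
  {g | (∀ i, N ≤ i → g (ee K i) = ee K i ∧ g.symm (ee K i) = ee K i) ∧
    (∀ i, i < N → ((g (ee K i)).support : Set ℕ) ⊆ Set.Iio N ∧
      ((g.symm (ee K i)).support : Set ℕ) ⊆ Set.Iio N)}

variable (K : Type) [Field K]

/-- A `K`-module `R` with a `GL`-action (given by `act`) is a *polynomial representation*
if it embeds `GL`-equivariantly into a direct sum of tensor powers of `𝐕`. -/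
def IsPolyRep (R : Type) [AddCommGroup R] [Module K R]
    (act : (Vec K ≃ₗ[K] Vec K) → (R →ₗ[K] R)) : Prop :=
  ∃ (ι : Type) (d : ι → ℕ)
    (emb : R →ₗ[K] DirectSum ι (fun i => ⨂[K] (_j : Fin (d i)), Vec K)),
      Function.Injective emb ∧
      ∀ g ∈ GLSet K, ∀ x : R,
        emb (act g x) =
          DFinsupp.mapRange.linearMap
            (fun i => PiTensorProduct.map (fun _ : Fin (d i) => g.toLinearMap)) (emb x)

variable (R : Type) [CommRing R] [Algebra K R]
variable (act : (Vec K ≃ₗ[K] Vec K) → (R ≃ₐ[K] R))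

/-- The underlying polynomial-representation condition for the `GL`-algebra `R`. -/
def IsGLAlgebra : Prop :=
  (act 1 = AlgEquiv.refl) ∧
  (∀ g ∈ GLSet K, ∀ h ∈ GLSet K, act (g * h) = (act h).trans (act g)) ∧
  IsPolyRep K R (fun g => (act g).toLinearMap)

/-- `R` is finitely `GL`-generated. -/
def IsFinGLGen : Prop :=
  ∃ s : Finset R,
    Algebra.adjoin K (⋃ f ∈ s, {y : R | ∃ g ∈ GLSet K, y = act g f}) = ⊤

/-- The homeomorphism of `X = Spec R` induced by `g ∈ GL`. -/
def pt (g : Vec K ≃ₗ[K] Vec K) : PrimeSpectrum R → PrimeSpectrum R :=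
  PrimeSpectrum.comap (act g).toRingEquiv.toRingHom

/-- A subset of `X = Spec R` is `GL`-stable. -/
def GLStable (S : Set (PrimeSpectrum R)) : Prop :=
  ∀ g ∈ GLSet K, pt K R act g ⁻¹' S = S

/-- The orbit closure `O̅ₓ`: the smallest closed `GL`-stable subset containing `x`. -/
def orbitClosure (x : PrimeSpectrum R) : Set (PrimeSpectrum R) :=
  ⋂₀ {Z | IsClosed Z ∧ GLStable K R act Z ∧ x ∈ Z}

/-- The generalized orbit `Oₓ` of a point. -/
def genOrbit (x : PrimeSpectrum R) : Set (PrimeSpectrum R) :=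
  {y | orbitClosure K R act y = orbitClosure K R act x}

/-- `x` is a `GL`-fixed point of `X`. -/
def isFixedPt (x : PrimeSpectrum R) : Prop :=
  ∀ g ∈ GLSet K, pt K R act g x = x

/-- The setoid whose classes are the generalized orbits. -/
def orbSetoid : Setoid (PrimeSpectrum R) :=
  ⟨fun x y => orbitClosure K R act x = orbitClosure K R act y,
    ⟨fun _ => rfl, Eq.symm, Eq.trans⟩⟩

/-- The orbit space `X^orb` with the quotient topology. -/
abbrev OrbSpace : Type := Quotient (orbSetoid K R act)

/-- The quotient map `π : X → X^orb`. -/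
def orbMap (x : PrimeSpectrum R) : OrbSpace K R act :=
  Quotient.mk (orbSetoid K R act) x

end

noncomputable section Aux
variable {K : Type} [Field K]

lemma ee_apply (i j : ℕ) : (ee K i) j = if i = j then 1 else 0 := by
  simp [ee, Finsupp.single_apply]

lemma supp_apply_subset {g : Vec K ≃ₗ[K] Vec K} {N : ℕ}
    (hfix : ∀ i, N ≤ i → g (ee K i) = ee K i)
    (hlow : ∀ i, i < N → ((g (ee K i)).support : Set ℕ) ⊆ Set.Iio N)
    {v : Vec K} (hv : (v.support : Set ℕ) ⊆ Set.Iio N) :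
    ((g v).support : Set ℕ) ⊆ Set.Iio N := by
  have hv1 : v = v.sum fun i c => c • ee K i := by
    simp [ee, Finsupp.smul_single, Finsupp.sum_single]
  have hg : g v = v.sum fun i c => c • g (ee K i) := by
    conv_lhs => rw [hv1]
    rw [map_finsuppSum]
    simp
  rw [hg]
  intro a ha
  have := Finsupp.support_sum ha
  simp only [Finset.mem_biUnion] at this
  obtain ⟨i, hi, hai⟩ := this
  have hiN : i < N := hv (Finset.mem_coe.mpr hi)
  have : a ∈ (g (ee K i)).support := Finsupp.support_smul hai
  exact hlow i hiN this

lemma GLn_mono {N M : ℕ} (h : N ≤ M) : GLn K N ⊆ GLn K M := by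
  rintro g ⟨hfix, hlow⟩
  constructor
  · intro i hi; exact hfix i (le_trans h hi)
  · intro i hi
    by_cases hiN : i < N
    · exact ⟨(hlow i hiN).1.trans (Set.Iio_subset_Iio h),
        (hlow i hiN).2.trans (Set.Iio_subset_Iio h)⟩
    · push_neg at hiN
      have h1 := (hfix i hiN).1
      have h2 := (hfix i hiN).2
      rw [h1, h2]
      have : ((ee K i).support : Set ℕ) ⊆ Set.Iio M := by
        intro a ha
        simp only [ee, Finset.coe_subset] at ha
        have : a ∈ Finsupp.support (Finsupp.single i (1:K)) := ha
        rw [Finsupp.support_single_ne_zero _ one_ne_zero] at this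
        simp only [Finset.mem_singleton] at this
        subst this
        exact hi
      exact ⟨this, this⟩

lemma mem_GLSet_iff {g : Vec K ≃ₗ[K] Vec K} : g ∈ GLSet K ↔ ∃ N, g ∈ GLn K N := Iff.rfl

lemma mul_apply' (g h : Vec K ≃ₗ[K] Vec K) (v : Vec K) : (g * h) v = g (h v) := rfl
lemma mul_symm_apply' (g h : Vec K ≃ₗ[K] Vec K) (v : Vec K) :
    (g * h).symm v = h.symm (g.symm v) := rfl
lemma one_apply' (v : Vec K) : (1 : Vec K ≃ₗ[K] Vec K) v = v := rfl
lemma one_symm_apply' (v : Vec K) : (1 : Vec K ≃ₗ[K] Vec K).symm v = v := rfl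
lemma inv_eq_symm (g : Vec K ≃ₗ[K] Vec K) : g⁻¹ = g.symm := rfl

lemma one_mem_GLSet : (1 : Vec K ≃ₗ[K] Vec K) ∈ GLSet K := by
  exact ⟨0, fun i _ => ⟨rfl, rfl⟩, fun i hi => absurd hi (Nat.not_lt_zero i)⟩

lemma inv_mem_GLSet {g : Vec K ≃ₗ[K] Vec K} (hg : g ∈ GLSet K) : g⁻¹ ∈ GLSet K := by
  obtain ⟨N, hfix, hlow⟩ := hg
  refine ⟨N, fun i hi => ⟨(hfix i hi).2, ?_⟩, fun i hi => ⟨(hlow i hi).2, ?_⟩⟩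
  · rw [inv_eq_symm]; rw [LinearEquiv.symm_symm]; exact (hfix i hi).1
  · rw [inv_eq_symm]; rw [LinearEquiv.symm_symm]; exact (hlow i hi).1

lemma mul_mem_GLSet {g h : Vec K ≃ₗ[K] Vec K} (hg : g ∈ GLSet K) (hh : h ∈ GLSet K) :
    g * h ∈ GLSet K := by
  obtain ⟨N, hgN⟩ := hg
  obtain ⟨M, hhM⟩ := hh
  set P := max N M
  have hgP := GLn_mono (le_max_left N M) hgN
  have hhP := GLn_mono (le_max_right N M) hhM
  refine ⟨P, fun i hi => ?_, fun i hi => ?_⟩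
  · rw [mul_apply', mul_symm_apply', (hhP.1 i hi).1, (hgP.1 i hi).1,
      (hgP.1 i hi).2, (hhP.1 i hi).2]
    exact ⟨rfl, rfl⟩
  · constructor
    · rw [mul_apply']
      exact supp_apply_subset (fun j hj => (hgP.1 j hj).1) (fun j hj => (hgP.2 j hj).1)
        ((hhP.2 i hi).1)
    · rw [mul_symm_apply']
      exact supp_apply_subset (fun j hj => (hhP.1 j hj).2) (fun j hj => (hhP.2 j hj).2)
        ((hgP.2 i hi).2)

end Aux

noncomputable section Mat
variable {K : Type} [Field K]

def matVec (N : ℕ) (A : Matrix (Fin N) (Fin N) K) (c : ℕ) : Vec K :=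
  if hc : c < N then ∑ i : Fin N, A i ⟨c, hc⟩ • ee K i else ee K c

def matMap (N : ℕ) (A : Matrix (Fin N) (Fin N) K) : Vec K →ₗ[K] Vec K :=
  Finsupp.linearCombination K (matVec N A)

lemma matMap_ee (N : ℕ) (A : Matrix (Fin N) (Fin N) K) (c : ℕ) :
    matMap N A (ee K c) = matVec N A c := by
  simp [matMap, ee, Finsupp.linearCombination_single]

lemma single_eq_smul_ee (a : ℕ) (b : K) : Finsupp.single a b = b • ee K a := by
  simp [ee, Finsupp.smul_single]

lemma matMap_comp (N : ℕ) (A B : Matrix (Fin N) (Fin N) K) :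
    (matMap N A).comp (matMap N B) = matMap N (A * B) := by
  apply Finsupp.lhom_ext
  intro a b
  rw [single_eq_smul_ee]
  simp only [map_smul, LinearMap.comp_apply]
  congr 1
  rw [matMap_ee, matMap_ee]
  unfold matVec
  by_cases ha : a < N
  · rw [dif_pos ha, dif_pos ha, map_sum]
    simp only [map_smul, matMap_ee]
    have : ∀ i : Fin N, matVec N A (i : ℕ) = ∑ k : Fin N, A k i • ee K k := by
      intro i
      rw [matVec, dif_pos i.2]
    simp only [this, Finset.smul_sum, smul_smul]
    rw [Finset.sum_comm]
    refine Finset.sum_congr rfl fun k _ => ?_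
    rw [← Finset.sum_smul]
    congr 1
    simp [Matrix.mul_apply, mul_comm]
  · rw [dif_neg ha, dif_neg ha, matMap_ee, matVec, dif_neg ha]

lemma matMap_one (N : ℕ) : matMap N (1 : Matrix (Fin N) (Fin N) K) = LinearMap.id := by
  apply Finsupp.lhom_ext
  intro a b
  rw [single_eq_smul_ee]
  simp only [map_smul, LinearMap.id_apply]
  congr 1
  rw [matMap_ee, matVec]
  by_cases ha : a < N
  · rw [dif_pos ha]
    rw [Finset.sum_eq_single (⟨a, ha⟩ : Fin N)]
    · simp [Matrix.one_apply]
    · intro i _ hne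
      rw [Matrix.one_apply_ne hne, zero_smul]
    · intro h; exact absurd (Finset.mem_univ _) h
  · rw [dif_neg ha]

def matEquiv (N : ℕ) (A B : Matrix (Fin N) (Fin N) K)
    (hAB : A * B = 1) (hBA : B * A = 1) : Vec K ≃ₗ[K] Vec K :=
  LinearEquiv.ofLinear (matMap N A) (matMap N B)
    (by rw [matMap_comp, hAB, matMap_one]) (by rw [matMap_comp, hBA, matMap_one])

lemma matEquiv_ee (N : ℕ) (A B : Matrix (Fin N) (Fin N) K) (hAB hBA) (c : ℕ) :
    matEquiv N A B hAB hBA (ee K c) = matVec N A c := by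
  rw [matEquiv, LinearEquiv.ofLinear_apply, matMap_ee]

lemma matEquiv_symm_ee (N : ℕ) (A B : Matrix (Fin N) (Fin N) K) (hAB hBA) (c : ℕ) :
    (matEquiv N A B hAB hBA).symm (ee K c) = matVec N B c := by
  rw [matEquiv, LinearEquiv.ofLinear_symm_apply, matMap_ee]

lemma matVec_support (N : ℕ) (A : Matrix (Fin N) (Fin N) K) (c : ℕ) (hc : c < N) :
    ((matVec N A c).support : Set ℕ) ⊆ Set.Iio N := by
  rw [matVec, dif_pos hc]
  intro a ha
  obtain ⟨i, _, hai⟩ := Finsupp.mem_support_finset_sum _ ha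
  have : a ∈ (ee K (i:ℕ)).support := Finsupp.support_smul hai
  have := Finsupp.support_single_subset this
  simp only [Finset.mem_singleton] at this
  subst this
  exact i.2

lemma matEquiv_mem_GLn (N : ℕ) (A B : Matrix (Fin N) (Fin N) K) (hAB hBA) :
    matEquiv N A B hAB hBA ∈ GLn K N := by
  constructor
  · intro i hi
    rw [matEquiv_ee, matEquiv_symm_ee, matVec, matVec, dif_neg (not_lt.mpr hi),
      dif_neg (not_lt.mpr hi)]
    exact ⟨rfl, rfl⟩
  · intro i hi
    rw [matEquiv_ee, matEquiv_symm_ee]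
    exact ⟨matVec_support N A i hi, matVec_support N B i hi⟩

lemma matEquiv_mem_GLSet (N : ℕ) (A B : Matrix (Fin N) (Fin N) K) (hAB hBA) :
    matEquiv N A B hAB hBA ∈ GLSet K :=
  ⟨N, matEquiv_mem_GLn N A B hAB hBA⟩

def gMat (N : ℕ) (g : Vec K ≃ₗ[K] Vec K) : Matrix (Fin N) (Fin N) K :=
  fun i j => (g (ee K (j : ℕ))) (i : ℕ)

lemma GLn_symm {N : ℕ} {g : Vec K ≃ₗ[K] Vec K} (hg : g ∈ GLn K N) : g.symm ∈ GLn K N := by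
  refine ⟨fun i hi => ⟨(hg.1 i hi).2, ?_⟩, fun i hi => ⟨(hg.2 i hi).2, ?_⟩⟩
  · rw [LinearEquiv.symm_symm]; exact (hg.1 i hi).1
  · rw [LinearEquiv.symm_symm]; exact (hg.2 i hi).1

lemma expand_eq {N : ℕ} {w : Vec K} (hw : (w.support : Set ℕ) ⊆ Set.Iio N) :
    w = ∑ k : Fin N, w (k : ℕ) • ee K (k : ℕ) := by
  ext c
  rw [Finsupp.finset_sum_apply]
  simp only [Finsupp.smul_apply, ee_apply, smul_eq_mul]
  by_cases hc : c < N
  · rw [Finset.sum_eq_single (⟨c, hc⟩ : Fin N)]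
    · simp
    · intro i _ hne
      rw [if_neg, mul_zero]
      intro hic
      exact hne (Fin.ext hic)
    · intro h; exact absurd (Finset.mem_univ _) h
  · have hc0 : w c = 0 := by
      by_contra h
      exact hc (hw (Finsupp.mem_support_iff.mpr h))
    rw [hc0]
    symm
    apply Finset.sum_eq_zero
    intro i _
    rw [if_neg, mul_zero]
    intro hic
    exact hc (hic ▸ i.2)

lemma gMat_mul_symm {N : ℕ} {g : Vec K ≃ₗ[K] Vec K} (hg : g ∈ GLn K N) :
    gMat N g * gMat N g.symm = 1 := by
  ext i j
  rw [Matrix.mul_apply]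
  have hsupp := (hg.2 (j : ℕ) j.2).2
  have hexp : g.symm (ee K (j:ℕ)) = ∑ k : Fin N, (g.symm (ee K (j:ℕ))) (k:ℕ) • ee K (k:ℕ) :=
    expand_eq hsupp
  have happ : ee K (j:ℕ) = ∑ k : Fin N, (g.symm (ee K (j:ℕ))) (k:ℕ) • g (ee K (k:ℕ)) := by
    conv_lhs => rw [← g.apply_symm_apply (ee K (j:ℕ))]
    conv_lhs => rw [hexp]
    rw [map_sum]
    simp
  have := congrArg (fun v : Vec K => v (i:ℕ)) happ
  simp only [Finsupp.finset_sum_apply, Finsupp.smul_apply, smul_eq_mul] at this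
  rw [Matrix.one_apply]
  simp only [ee_apply] at this
  rw [show ((if (j:ℕ) = (i:ℕ) then (1:K) else 0) = if i = j then 1 else 0) by
    by_cases h : i = j
    · subst h; simp
    · rw [if_neg h, if_neg (fun hj => h (Fin.ext hj.symm))]] at this
  rw [this]
  congr 1
  ext k
  rw [mul_comm]
  rfl

lemma matEquiv_eq_self {N : ℕ} {g : Vec K ≃ₗ[K] Vec K} (hg : g ∈ GLn K N) (hAB hBA) :
    matEquiv N (gMat N g) (gMat N g.symm) hAB hBA = g := by
  apply LinearEquiv.toLinearMap_injective
  apply Finsupp.lhom_ext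
  intro a b
  rw [single_eq_smul_ee]
  simp only [map_smul, LinearEquiv.coe_coe]
  congr 1
  rw [matEquiv_ee, matVec]
  by_cases ha : a < N
  · rw [dif_pos ha]
    have := expand_eq ((hg.2 a ha).1)
    conv_rhs => rw [this]
    congr
  · rw [dif_neg ha, (hg.1 a (not_lt.mp ha)).1]
end Mat

noncomputable section Top
variable {K : Type} [Field K] {R : Type} [CommRing R] [Algebra K R]
  {act : (Vec K ≃ₗ[K] Vec K) → (R ≃ₐ[K] R)}

lemma mem_pt (g : Vec K ≃ₗ[K] Vec K) (x : PrimeSpectrum R) (f : R) :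
    f ∈ (pt K R act g x).asIdeal ↔ act g f ∈ x.asIdeal := by
  rw [pt, PrimeSpectrum.comap_asIdeal, Ideal.mem_comap]
  rfl

variable (halg : IsGLAlgebra K R act)
include halg

lemma pt_one (x : PrimeSpectrum R) : pt K R act 1 x = x := by
  ext f
  rw [mem_pt, halg.1]
  rfl

lemma pt_mul {g h : Vec K ≃ₗ[K] Vec K} (hg : g ∈ GLSet K) (hh : h ∈ GLSet K)
    (x : PrimeSpectrum R) :
    pt K R act (g * h) x = pt K R act h (pt K R act g x) := by
  ext f
  rw [mem_pt, mem_pt, mem_pt, halg.2.1 g hg h hh]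
  rfl

lemma pt_inv_pt {g : Vec K ≃ₗ[K] Vec K} (hg : g ∈ GLSet K) (x : PrimeSpectrum R) :
    pt K R act g⁻¹ (pt K R act g x) = x := by
  rw [← pt_mul halg hg (inv_mem_GLSet hg), mul_inv_cancel, pt_one halg]

lemma pt_pt_inv {g : Vec K ≃ₗ[K] Vec K} (hg : g ∈ GLSet K) (x : PrimeSpectrum R) :
    pt K R act g (pt K R act g⁻¹ x) = x := by
  rw [← pt_mul halg (inv_mem_GLSet hg) hg, inv_mul_cancel, pt_one halg]

omit halg in
lemma pt_continuous (g : Vec K ≃ₗ[K] Vec K) : Continuous (pt K R act g) :=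
  PrimeSpectrum.continuous_comap _

omit halg in
lemma mem_orbitClosure_self (x : PrimeSpectrum R) : x ∈ orbitClosure K R act x :=
  fun _ hZ => hZ.2.2

omit halg in
lemma orbitClosure_closed (x : PrimeSpectrum R) : IsClosed (orbitClosure K R act x) :=
  isClosed_sInter fun _ hZ => hZ.1

omit halg in
lemma orbitClosure_stable (x : PrimeSpectrum R) : GLStable K R act (orbitClosure K R act x) := by
  intro g hg
  rw [orbitClosure, Set.preimage_sInter]
  apply Set.eq_of_subset_of_subset
  · intro y hy
    intro Z hZ
    have := Set.mem_iInter₂.mp hy Z hZ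
    rwa [hZ.2.1 g hg] at this
  · intro y hy
    apply Set.mem_iInter₂.mpr
    intro Z hZ
    rw [hZ.2.1 g hg]
    exact hy Z hZ

omit halg in
lemma orbitClosure_min {x : PrimeSpectrum R} {Z : Set (PrimeSpectrum R)}
    (hc : IsClosed Z) (hs : GLStable K R act Z) (hx : x ∈ Z) :
    orbitClosure K R act x ⊆ Z :=
  Set.sInter_subset_of_mem ⟨hc, hs, hx⟩

lemma mem_of_stable {S : Set (PrimeSpectrum R)} (hS : GLStable K R act S)
    {g : Vec K ≃ₗ[K] Vec K} (hg : g ∈ GLSet K) {x : PrimeSpectrum R} (hx : x ∈ S) :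
    pt K R act g x ∈ S := by
  rw [← hS g hg] at hx; exact hx

lemma mem_of_stable' {S : Set (PrimeSpectrum R)} (hS : GLStable K R act S)
    {g : Vec K ≃ₗ[K] Vec K} (hg : g ∈ GLSet K) {x : PrimeSpectrum R}
    (hx : pt K R act g x ∈ S) : x ∈ S := by
  have := mem_of_stable halg hS (inv_mem_GLSet hg) hx
  rwa [pt_inv_pt halg hg] at this

lemma orbitClosure_pt {g : Vec K ≃ₗ[K] Vec K} (hg : g ∈ GLSet K) (x : PrimeSpectrum R) :
    orbitClosure K R act (pt K R act g x) = orbitClosure K R act x := by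
  apply Set.eq_of_subset_of_subset
  · exact orbitClosure_min (orbitClosure_closed x) (orbitClosure_stable x)
      (mem_of_stable halg (orbitClosure_stable x) hg (mem_orbitClosure_self x))
  · exact orbitClosure_min (orbitClosure_closed _) (orbitClosure_stable _)
      (mem_of_stable' halg (orbitClosure_stable _) hg (mem_orbitClosure_self _))

lemma orbMap_pt {g : Vec K ≃ₗ[K] Vec K} (hg : g ∈ GLSet K) (x : PrimeSpectrum R) :
    orbMap K R act (pt K R act g x) = orbMap K R act x :=
  Quotient.sound (orbitClosure_pt halg hg x)

lemma stable_pi_preimage (S : Set (OrbSpace K R act)) :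
    GLStable K R act (orbMap K R act ⁻¹' S) := by
  intro g hg
  ext x
  simp only [Set.mem_preimage, orbMap_pt halg hg x]

omit halg in
lemma stable_compl {S : Set (PrimeSpectrum R)} (hS : GLStable K R act S) :
    GLStable K R act Sᶜ := by
  intro g hg
  rw [Set.preimage_compl, hS g hg]

omit halg in
lemma orbMap_quotientMap : Topology.IsQuotientMap (orbMap K R act) :=
  isQuotientMap_quotient_mk'

omit halg in
lemma orbMap_surjective : Function.Surjective (orbMap K R act) :=
  fun a => Quotient.exists_rep a

lemma sat_closed {Z : Set (PrimeSpectrum R)} (hc : IsClosed Z) (hs : GLStable K R act Z) :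
    orbMap K R act ⁻¹' (orbMap K R act '' Z) = Z := by
  apply Set.eq_of_subset_of_subset
  · rintro w hw
    obtain ⟨x, hxZ, hxw⟩ := hw
    have hocc : orbitClosure K R act w = orbitClosure K R act x := Quotient.exact hxw.symm
    have : w ∈ orbitClosure K R act w := mem_orbitClosure_self w
    rw [hocc] at this
    exact orbitClosure_min hc hs hxZ this
  · exact Set.subset_preimage_image _ _

lemma sat_open {W : Set (PrimeSpectrum R)} (hc : IsOpen W) (hs : GLStable K R act W) :
    orbMap K R act ⁻¹' (orbMap K R act '' W) = W := by
  apply Set.eq_of_subset_of_subset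
  · rintro w hw
    obtain ⟨x, hxW, hxw⟩ := hw
    by_contra hwW
    have hocc : orbitClosure K R act w = orbitClosure K R act x := Quotient.exact hxw.symm
    have hsub : orbitClosure K R act w ⊆ Wᶜ :=
      orbitClosure_min (isClosed_compl_iff.mpr hc) (stable_compl hs) hwW
    rw [hocc] at hsub
    exact hsub (mem_orbitClosure_self x) hxW
  · exact Set.subset_preimage_image _ _

lemma isOpen_pi_image {W : Set (PrimeSpectrum R)} (hc : IsOpen W) (hs : GLStable K R act W) :
    IsOpen (orbMap K R act '' W) := by
  rw [← (orbMap_quotientMap (act := act)).isOpen_preimage, sat_open halg hc hs]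
  exact hc

lemma isClosed_pi_image {Z : Set (PrimeSpectrum R)} (hc : IsClosed Z) (hs : GLStable K R act Z) :
    IsClosed (orbMap K R act '' Z) := by
  rw [← (orbMap_quotientMap (act := act)).isClosed_preimage, sat_closed halg hc hs]
  exact hc

lemma closure_pi (x : PrimeSpectrum R) :
    closure {orbMap K R act x} = orbMap K R act '' (orbitClosure K R act x) := by
  apply Set.eq_of_subset_of_subset
  · apply closure_minimal
    · exact Set.singleton_subset_iff.mpr ⟨x, mem_orbitClosure_self x, rfl⟩
    · exact isClosed_pi_image halg (orbitClosure_closed x) (orbitClosure_stable x)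
  · have hxC : x ∈ orbMap K R act ⁻¹' closure {orbMap K R act x} :=
      subset_closure rfl
    have hcl : IsClosed (orbMap K R act ⁻¹' closure {orbMap K R act x}) :=
      (IsClosed.preimage (orbMap_quotientMap (act := act)).continuous isClosed_closure)
    have := orbitClosure_min hcl (stable_pi_preimage halg _) hxC
    intro a ha
    obtain ⟨w, hw, rfl⟩ := ha
    exact this hw
end Top

noncomputable section WB
variable {K : Type} [Field K] {R : Type} [CommRing R] [Algebra K R]
  {act : (Vec K ≃ₗ[K] Vec K) → (R ≃ₐ[K] R)}

/-- The basic open `D(f)` as a set. -/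
def DSet (f : R) : Set (PrimeSpectrum R) := {y | f ∉ y.asIdeal}

lemma isOpen_DSet (f : R) : IsOpen (DSet f) := by
  have : DSet f = ↑(PrimeSpectrum.basicOpen f) := rfl
  rw [this]
  exact (PrimeSpectrum.basicOpen f).2

lemma isCompact_DSet (f : R) : IsCompact (DSet f) :=
  PrimeSpectrum.isCompact_basicOpen f

/-- The `GL`-saturation of `D(f)`. -/
def WSet (f : R) : Set (PrimeSpectrum R) :=
  ⋃ g ∈ GLSet K, pt K R act g ⁻¹' DSet f

lemma mem_WSet_iff (f : R) (x : PrimeSpectrum R) :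
    x ∈ WSet (act := act) f ↔ ∃ g ∈ GLSet K, act g f ∉ x.asIdeal := by
  simp only [WSet, Set.mem_iUnion, Set.mem_preimage, DSet, Set.mem_setOf_eq, mem_pt,
    exists_prop]

lemma isOpen_WSet (f : R) : IsOpen (WSet (act := act) f) :=
  isOpen_biUnion fun g _ => (isOpen_DSet f).preimage (pt_continuous g)

variable (halg : IsGLAlgebra K R act)
include halg

lemma DSet_subset_WSet (f : R) : DSet f ⊆ WSet (act := act) f := by
  intro x hx
  rw [mem_WSet_iff]
  refine ⟨1, one_mem_GLSet, ?_⟩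
  rw [halg.1]
  exact hx

lemma stable_WSet (f : R) : GLStable K R act (WSet (act := act) f) := by
  intro h hh
  ext x
  simp only [Set.mem_preimage, mem_WSet_iff]
  constructor
  · rintro ⟨g, hg, hfg⟩
    refine ⟨h * g, mul_mem_GLSet hh hg, ?_⟩
    rw [← mem_pt (act := act)] at hfg ⊢
    rwa [pt_mul halg hh hg]
  · rintro ⟨g, hg, hfg⟩
    refine ⟨h⁻¹ * g, mul_mem_GLSet (inv_mem_GLSet hh) hg, ?_⟩
    rw [← mem_pt (act := act)] at hfg ⊢
    rw [← pt_mul halg hh (mul_mem_GLSet (inv_mem_GLSet hh) hg), ← mul_assoc,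
      mul_inv_cancel, one_mul]
    exact hfg

/-- The basic quasi-compact open of the orbit space. -/
def BSet (f : R) : Set (OrbSpace K R act) := orbMap K R act '' WSet (act := act) f

lemma isOpen_BSet (f : R) : IsOpen (BSet (act := act) f) :=
  isOpen_pi_image halg (isOpen_WSet f) (stable_WSet halg f)

lemma preimage_BSet (f : R) :
    orbMap K R act ⁻¹' BSet (act := act) f = WSet (act := act) f :=
  sat_open halg (isOpen_WSet f) (stable_WSet halg f)

lemma isCompact_pi_sat {S : Set (PrimeSpectrum R)} (hS : IsCompact S)
    (T : Set (PrimeSpectrum R)) (hT : T = ⋃ g ∈ GLSet K, pt K R act g ⁻¹' S)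
    (hST : S ⊆ T) : IsCompact (orbMap K R act '' T) := by
  apply isCompact_of_finite_subcover
  intro ι U hUopen hUcov
  have hVopen : ∀ i, IsOpen (orbMap K R act ⁻¹' U i) := fun i =>
    (hUopen i).preimage (orbMap_quotientMap (act := act)).continuous
  have hVstable : ∀ i, GLStable K R act (orbMap K R act ⁻¹' U i) := fun i =>
    stable_pi_preimage halg _
  have hcov : S ⊆ ⋃ i, orbMap K R act ⁻¹' U i := by
    intro x hx
    have : orbMap K R act x ∈ ⋃ i, U i := hUcov ⟨x, hST hx, rfl⟩
    simpa using this
  obtain ⟨t, ht⟩ := hS.elim_finite_subcover _ hVopen hcov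
  refine ⟨t, ?_⟩
  rintro a ⟨x, hxT, rfl⟩
  rw [hT] at hxT
  obtain ⟨g, hg, hx⟩ := Set.mem_iUnion₂.mp hxT
  have : pt K R act g x ∈ ⋃ i ∈ t, orbMap K R act ⁻¹' U i := ht hx
  obtain ⟨i, hi, hmem⟩ := Set.mem_iUnion₂.mp this
  apply Set.mem_iUnion₂.mpr
  refine ⟨i, hi, ?_⟩
  have := Set.mem_preimage.mp hmem
  rw [orbMap_pt halg hg] at this
  exact this

lemma isCompact_BSet (f : R) : IsCompact (BSet (act := act) f) :=
  isCompact_pi_sat halg (isCompact_DSet f) _ rfl (DSet_subset_WSet halg f)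

end WB

noncomputable section Poly
open MvPolynomial
variable {K : Type} [Field K]

def vpoly (N : ℕ) (v : Vec K) : Option (Fin N) → MvPolynomial (Fin N × Fin N) K
  | none => 1
  | some i => ∑ c : Fin N, MvPolynomial.C (v (c : ℕ)) * MvPolynomial.X (i, c)

def vvec (N : ℕ) (v : Vec K) : Option (Fin N) → Vec K
  | none => v - ∑ c : Fin N, v (c : ℕ) • ee K (c : ℕ)
  | some i => ee K (i : ℕ)

lemma head_apply (N : ℕ) (v : Vec K) (c : ℕ) :
    (∑ k : Fin N, v (k : ℕ) • ee K (k : ℕ)) c = if c < N then v c else 0 := by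
  rw [Finsupp.finset_sum_apply]
  simp only [Finsupp.smul_apply, ee_apply, smul_eq_mul]
  by_cases hc : c < N
  · rw [if_pos hc, Finset.sum_eq_single (⟨c, hc⟩ : Fin N)]
    · simp
    · intro i _ hne
      rw [if_neg, mul_zero]
      intro hic; exact hne (Fin.ext hic)
    · intro hmem; exact absurd (Finset.mem_univ _) hmem
  · rw [if_neg hc]
    apply Finset.sum_eq_zero
    intro i _
    rw [if_neg, mul_zero]
    intro hic; exact hc (hic ▸ i.2)

lemma matEquiv_fix {N : ℕ} (A B : Matrix (Fin N) (Fin N) K) (hAB hBA) {w : Vec K}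
    (hw : ∀ c, c < N → w c = 0) : matEquiv N A B hAB hBA w = w := by
  have hv1 : w = w.sum fun i c => c • ee K i := by
    simp [ee, Finsupp.smul_single, Finsupp.sum_single]
  conv_lhs => rw [hv1]
  rw [map_finsuppSum]
  have : (w.sum fun i c => matEquiv N A B hAB hBA (c • ee K i)) =
      w.sum fun i c => c • ee K i := by
    apply Finsupp.sum_congr
    intro i hi
    rw [map_smul, matEquiv_ee, matVec, dif_neg]
    intro h
    exact Finsupp.mem_support_iff.mp hi (hw i h)
  rw [this, ← hv1]

lemma matEquiv_decomp {N : ℕ} (A B : Matrix (Fin N) (Fin N) K) (hAB hBA) (v : Vec K) :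
    matEquiv N A B hAB hBA v = ∑ u : Option (Fin N),
      (MvPolynomial.eval (fun p => A p.1 p.2) (vpoly N v u)) • vvec N v u := by
  rw [Fintype.sum_option]
  have heval : ∀ i : Fin N, MvPolynomial.eval (fun p => A p.1 p.2) (vpoly N v (some i)) =
      ∑ c : Fin N, v (c : ℕ) * A i c := by
    intro i
    simp [vpoly, MvPolynomial.eval_C, MvPolynomial.eval_X]
  simp only [heval]
  have h0 : (vpoly N v none : MvPolynomial (Fin N × Fin N) K) = 1 := rfl
  have h0' : vvec N v none = v - ∑ k : Fin N, v (k : ℕ) • ee K (k : ℕ) := rfl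
  have h1 : ∀ i : Fin N, vvec N v (some i) = ee K (i : ℕ) := fun _ => rfl
  rw [h0, _root_.map_one, one_smul, h0']
  simp only [h1]
  set head := ∑ k : Fin N, v (k : ℕ) • ee K (k : ℕ) with hhead
  have htail : ∀ c, c < N → (v - head) c = 0 := by
    intro c hc
    rw [Finsupp.sub_apply, head_apply, if_pos hc, sub_self]
  have hfix : matEquiv N A B hAB hBA (v - head) = v - head := matEquiv_fix A B hAB hBA htail
  have hsplit : matEquiv N A B hAB hBA v =
      matEquiv N A B hAB hBA head + (v - head) := by
    rw [← hfix, ← map_add]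
    congr 1
    abel
  rw [hsplit]
  have hheadmap : matEquiv N A B hAB hBA head =
      ∑ i : Fin N, (∑ c : Fin N, v (c : ℕ) * A i c) • ee K (i : ℕ) := by
    rw [hhead, map_sum]
    simp only [map_smul, matEquiv_ee]
    have hmv : ∀ k : Fin N, matVec N A (k : ℕ) = ∑ i : Fin N, A i k • ee K (i : ℕ) := by
      intro k
      rw [matVec, dif_pos k.2]
    simp only [hmv, Finset.smul_sum, smul_smul]
    rw [Finset.sum_comm]
    refine Finset.sum_congr rfl fun i _ => ?_
    rw [← Finset.sum_smul]
  rw [hheadmap]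
  abel

lemma tensor_decomp {d N : ℕ} (A B : Matrix (Fin N) (Fin N) K) (hAB hBA)
    (v : Fin d → Vec K) :
    PiTensorProduct.map (fun _ : Fin d => (matEquiv N A B hAB hBA).toLinearMap) (tprod K v) =
    ∑ r : Fin d → Option (Fin N),
      (MvPolynomial.eval (fun p => A p.1 p.2) (∏ j, vpoly N (v j) (r j))) •
        tprod K fun j => vvec N (v j) (r j) := by
  rw [PiTensorProduct.map_tprod]
  have h1 : (fun j => (matEquiv N A B hAB hBA).toLinearMap (v j)) = fun j =>
      ∑ u : Option (Fin N),
        (MvPolynomial.eval (fun p => A p.1 p.2) (vpoly N (v j) u)) • vvec N (v j) u := by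
    funext j
    exact matEquiv_decomp A B hAB hBA (v j)
  rw [h1, MultilinearMap.map_sum]
  refine Finset.sum_congr rfl fun r _ => ?_
  rw [MultilinearMap.map_smul_univ, map_prod]

lemma mapRange_of {ι : Type} [DecidableEq ι] {β₁ β₂ : ι → Type}
    [∀ i, AddCommMonoid (β₁ i)] [∀ i, Module K (β₁ i)]
    [∀ i, AddCommMonoid (β₂ i)] [∀ i, Module K (β₂ i)]
    (F : ∀ i, β₁ i →ₗ[K] β₂ i) (i : ι) (x : β₁ i) :
    DFinsupp.mapRange.linearMap F (DirectSum.of β₁ i x) = DirectSum.of β₂ i (F i x) := by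
  classical
  simp only [DFinsupp.mapRange.linearMap_apply]
  exact DFinsupp.mapRange_single

lemma dsum_decomp {ι : Type} (d : ι → ℕ) (N : ℕ)
    (t : DirectSum ι fun i => ⨂[K] (_j : Fin (d i)), Vec K) :
    ∃ (σ : Type) (_ : Fintype σ)
      (w : σ → DirectSum ι fun i => ⨂[K] (_j : Fin (d i)), Vec K)
      (P : σ → MvPolynomial (Fin N × Fin N) K),
      ∀ (A B : Matrix (Fin N) (Fin N) K) (hAB : A * B = 1) (hBA : B * A = 1),
        DFinsupp.mapRange.linearMap
          (fun i => PiTensorProduct.map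
            (fun _ : Fin (d i) => (matEquiv N A B hAB hBA).toLinearMap)) t =
        ∑ u, (MvPolynomial.eval (fun p => A p.1 p.2) (P u)) • w u := by
  classical
  induction t using DirectSum.induction_on with
  | zero =>
    refine ⟨Empty, inferInstance, Empty.elim, Empty.elim, ?_⟩
    intro A B hAB hBA
    simp
  | of i τ =>
    have : ∃ (σ : Type) (_ : Fintype σ)
        (w : σ → ⨂[K] (_j : Fin (d i)), Vec K)
        (P : σ → MvPolynomial (Fin N × Fin N) K),
        ∀ (A B : Matrix (Fin N) (Fin N) K) (hAB : A * B = 1) (hBA : B * A = 1),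
          PiTensorProduct.map
            (fun _ : Fin (d i) => (matEquiv N A B hAB hBA).toLinearMap) τ =
          ∑ u, (MvPolynomial.eval (fun p => A p.1 p.2) (P u)) • w u := by
      induction τ using PiTensorProduct.induction_on with
      | smul_tprod r v =>
        refine ⟨Fin (d i) → Option (Fin N), inferInstance,
          fun rr => tprod K fun j => vvec N (v j) (rr j),
          fun rr => MvPolynomial.C r * ∏ j, vpoly N (v j) (rr j), ?_⟩
        intro A B hAB hBA
        rw [map_smul, tensor_decomp, Finset.smul_sum]
        refine Finset.sum_congr rfl fun rr _ => ?_
        simp only [_root_.map_mul, MvPolynomial.eval_C, mul_smul]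
      | add x y hx hy =>
        obtain ⟨σ₁, i₁, w₁, P₁, h₁⟩ := hx
        obtain ⟨σ₂, i₂, w₂, P₂, h₂⟩ := hy
        refine ⟨σ₁ ⊕ σ₂, inferInstance, Sum.elim w₁ w₂, Sum.elim P₁ P₂, ?_⟩
        intro A B hAB hBA
        rw [LinearMap.map_add, h₁ A B hAB hBA, h₂ A B hAB hBA, Fintype.sum_sum_type]
        simp
    obtain ⟨σ, fσ, w', P, hP⟩ := this
    refine ⟨σ, fσ, fun u => DirectSum.of _ i (w' u), P, ?_⟩
    intro A B hAB hBA
    rw [mapRange_of, hP A B hAB hBA]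
    rw [← DirectSum.lof_eq_of K, map_sum]
    refine Finset.sum_congr rfl fun u _ => ?_
    rw [map_smul, DirectSum.lof_eq_of K]
  | add x y hx hy =>
    obtain ⟨σ₁, i₁, w₁, P₁, h₁⟩ := hx
    obtain ⟨σ₂, i₂, w₂, P₂, h₂⟩ := hy
    refine ⟨σ₁ ⊕ σ₂, inferInstance, Sum.elim w₁ w₂, Sum.elim P₁ P₂, ?_⟩
    intro A B hAB hBA
    rw [map_add, h₁ A B hAB hBA, h₂ A B hAB hBA, Fintype.sum_sum_type]
    simp
end Poly

noncomputable section Key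
variable {K : Type} [Field K] {R : Type} [CommRing R] [Algebra K R]
  {act : (Vec K ≃ₗ[K] Vec K) → (R ≃ₐ[K] R)}

lemma poly_exists (halg : IsGLAlgebra K R act) (N : ℕ) (f : R) (ℓ : R →ₗ[K] K) :
    ∃ F : MvPolynomial (Fin N × Fin N) K,
      ∀ (A B : Matrix (Fin N) (Fin N) K) (hAB : A * B = 1) (hBA : B * A = 1),
        MvPolynomial.eval (fun p => A p.1 p.2) F = ℓ (act (matEquiv N A B hAB hBA) f) := by
  obtain ⟨ι, d, emb, hinj, hequiv⟩ := halg.2.2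
  letI : AddCommGroup (DirectSum ι (fun i => ⨂[K] (_j : Fin (d i)), Vec K)) :=
    Module.addCommMonoidToAddCommGroup K
  obtain ⟨S, hS⟩ := emb.exists_leftInverse_of_injective (LinearMap.ker_eq_bot.mpr hinj)
  obtain ⟨σ, fσ, w, P, hP⟩ := dsum_decomp d N (emb f)
  refine ⟨∑ u, MvPolynomial.C (ℓ (S (w u))) * P u, ?_⟩
  intro A B hAB hBA
  have hSe : ∀ z : R, S (emb z) = z := fun z => congrArg (fun φ => φ z) hS
  have hact : emb (act (matEquiv N A B hAB hBA) f) =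
      ∑ u, (MvPolynomial.eval (fun p => A p.1 p.2) (P u)) • w u := by
    have he := hequiv _ (matEquiv_mem_GLSet N A B hAB hBA) f
    simp only [AlgEquiv.toLinearMap_apply] at he
    rw [he, hP A B hAB hBA]
  have : act (matEquiv N A B hAB hBA) f =
      ∑ u, (MvPolynomial.eval (fun p => A p.1 p.2) (P u)) • S (w u) := by
    rw [← hSe (act (matEquiv N A B hAB hBA) f), hact, map_sum]
    simp only [map_smul]
  rw [this, map_sum]
  simp only [map_smul, _root_.map_mul, MvPolynomial.eval_C, smul_eq_mul, map_sum]
  refine Finset.sum_congr rfl fun u _ => ?_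
  ring

lemma exists_functional (x : PrimeSpectrum R) {v : R} (hv : v ∉ x.asIdeal) :
    ∃ ℓ : R →ₗ[K] K, ℓ v ≠ 0 ∧ ∀ r ∈ x.asIdeal, ℓ r = 0 := by
  have hv' : v ∉ (x.asIdeal.restrictScalars K : Submodule K R) := hv
  obtain ⟨ℓ, hℓv, hℓmap⟩ :=
    Submodule.exists_dual_map_eq_bot_of_notMem hv' inferInstance
  refine ⟨ℓ, hℓv, fun r hr => ?_⟩
  have : ℓ r ∈ (x.asIdeal.restrictScalars K : Submodule K R).map ℓ :=
    Submodule.mem_map_of_mem hr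
  rw [hℓmap] at this
  exact this

lemma keyLemma [CharZero K] (halg : IsGLAlgebra K R act) (x : PrimeSpectrum R) (f h : R)
    (hf : ∃ g ∈ GLSet K, act g f ∉ x.asIdeal) (hh : ∃ g ∈ GLSet K, act g h ∉ x.asIdeal) :
    ∃ k ∈ GLSet K, act k f ∉ x.asIdeal ∧ act k h ∉ x.asIdeal := by
  obtain ⟨g, hgGL, hgf⟩ := hf
  obtain ⟨g', hg'GL, hg'h⟩ := hh
  obtain ⟨Ng, hgN⟩ := hgGL
  obtain ⟨Ng', hg'N⟩ := hg'GL
  set N := max Ng Ng' with hN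
  have hgN' : g ∈ GLn K N := GLn_mono (le_max_left _ _) hgN
  have hg'N' : g' ∈ GLn K N := GLn_mono (le_max_right _ _) hg'N
  obtain ⟨ℓf, hℓf, hℓf0⟩ := exists_functional (K := K) x hgf
  obtain ⟨ℓh, hℓh, hℓh0⟩ := exists_functional (K := K) x hg'h
  obtain ⟨F, hF⟩ := poly_exists halg N f ℓf
  obtain ⟨G, hG⟩ := poly_exists halg N h ℓh
  -- F is nonzero at the matrix of g
  have hABg : gMat N g * gMat N g.symm = 1 := gMat_mul_symm hgN'
  have hBAg : gMat N g.symm * gMat N g = 1 := by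
    have := gMat_mul_symm (GLn_symm hgN')
    rwa [LinearEquiv.symm_symm] at this
  have hFne : F ≠ 0 := by
    intro h0
    have := hF (gMat N g) (gMat N g.symm) hABg hBAg
    rw [matEquiv_eq_self hgN', h0, map_zero] at this
    exact hℓf this.symm
  have hABg' : gMat N g' * gMat N g'.symm = 1 := gMat_mul_symm hg'N'
  have hBAg' : gMat N g'.symm * gMat N g' = 1 := by
    have := gMat_mul_symm (GLn_symm hg'N')
    rwa [LinearEquiv.symm_symm] at this
  have hGne : G ≠ 0 := by
    intro h0
    have := hG (gMat N g') (gMat N g'.symm) hABg' hBAg'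
    rw [matEquiv_eq_self hg'N', h0, map_zero] at this
    exact hℓh this.symm
  -- the determinant polynomial
  set dpoly : MvPolynomial (Fin N × Fin N) K :=
    (Matrix.of fun i j : Fin N => (MvPolynomial.X (i, j) : MvPolynomial (Fin N × Fin N) K)).det
    with hdpoly
  have hdeval : ∀ φ : Fin N × Fin N → K,
      MvPolynomial.eval φ dpoly = (Matrix.of fun i j : Fin N => φ (i, j)).det := by
    intro φ
    rw [hdpoly, RingHom.map_det]
    congr 1
    ext i j
    simp [Matrix.map_apply]
  have hdne : dpoly ≠ 0 := by
    intro h0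
    have := hdeval (fun p => (1 : Matrix (Fin N) (Fin N) K) p.1 p.2)
    rw [h0, map_zero] at this
    have h1 : (Matrix.of fun i j : Fin N => (1 : Matrix (Fin N) (Fin N) K) (i, j).1 (i, j).2) =
        (1 : Matrix (Fin N) (Fin N) K) := by
      ext i j; simp [Matrix.of_apply]
    rw [h1, Matrix.det_one] at this
    exact one_ne_zero this.symm
  have hprod : F * G * dpoly ≠ 0 := mul_ne_zero (mul_ne_zero hFne hGne) hdne
  -- evaluate at a point where the product is nonzero
  have hpoint : ∃ φ : Fin N × Fin N → K, MvPolynomial.eval φ (F * G * dpoly) ≠ 0 := by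
    by_contra hc
    push_neg at hc
    apply hprod
    apply MvPolynomial.funext
    intro φ
    rw [map_zero]
    exact hc φ
  obtain ⟨φ, hφ⟩ := hpoint
  rw [_root_.map_mul, _root_.map_mul] at hφ
  have hFφ : MvPolynomial.eval φ F ≠ 0 := fun h0 => hφ (by rw [h0, zero_mul, zero_mul])
  have hGφ : MvPolynomial.eval φ G ≠ 0 := fun h0 => hφ (by rw [h0, mul_zero, zero_mul])
  have hdφ : MvPolynomial.eval φ dpoly ≠ 0 := fun h0 => hφ (by rw [h0, mul_zero])
  set A : Matrix (Fin N) (Fin N) K := Matrix.of fun i j => φ (i, j) with hA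
  have hdet : IsUnit A.det := by
    rw [isUnit_iff_ne_zero]
    rw [hdeval φ] at hdφ
    exact hdφ
  have hAB : A * A⁻¹ = 1 := Matrix.mul_nonsing_inv A hdet
  have hBA : A⁻¹ * A = 1 := Matrix.nonsing_inv_mul A hdet
  refine ⟨matEquiv N A A⁻¹ hAB hBA, matEquiv_mem_GLSet N A A⁻¹ hAB hBA, ?_, ?_⟩
  · intro hmem
    have := hF A A⁻¹ hAB hBA
    have hφA : (fun p : Fin N × Fin N => A p.1 p.2) = φ := by
      funext p
      rw [hA]
      simp [Matrix.of_apply]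
    rw [hφA] at this
    exact hFφ (this.trans (hℓf0 _ hmem))
  · intro hmem
    have := hG A A⁻¹ hAB hBA
    have hφA : (fun p : Fin N × Fin N => A p.1 p.2) = φ := by
      funext p
      rw [hA]
      simp [Matrix.of_apply]
    rw [hφA] at this
    exact hGφ (this.trans (hℓh0 _ hmem))
end Key
/-- For an affine `GL`-scheme `X = Spec R`, the orbit space `X^orb` (the set of
generalized orbits with the quotient topology) is a spectral topological space: it is
sober, its quasi-compact open subsets form a basis of the topology, and the
intersection of any two quasi-compact open subsets is quasi-compact. -/
theorem orbSpace_spectral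
    (K : Type) [Field K] [CharZero K]
    (R : Type) [CommRing R] [Algebra K R]
    (act : (Vec K ≃ₗ[K] Vec K) → (R ≃ₐ[K] R))
    (halg : IsGLAlgebra K R act) :
    QuasiSober (OrbSpace K R act) ∧ T0Space (OrbSpace K R act) ∧
    TopologicalSpace.IsTopologicalBasis
      {U : Set (OrbSpace K R act) | IsOpen U ∧ IsCompact U} ∧
    (∀ U V : Set (OrbSpace K R act), IsOpen U → IsCompact U → IsOpen V → IsCompact V →
      IsCompact (U ∩ V)) := by
  have hπc : Continuous (orbMap K R act) := (orbMap_quotientMap (act := act)).continuous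
  -- the W f = π ⁻¹' (B f) are saturated basic opens
  -- T0
  have hT0 : T0Space (OrbSpace K R act) := by
    refine ⟨fun a b hab => ?_⟩
    obtain ⟨x, rfl⟩ := orbMap_surjective (act := act) a
    obtain ⟨y, rfl⟩ := orbMap_surjective (act := act) b
    have hcl := inseparable_iff_closure_eq.mp hab
    rw [closure_pi halg, closure_pi halg] at hcl
    have hoc : orbitClosure K R act x = orbitClosure K R act y := by
      have h1 := sat_closed halg (orbitClosure_closed x) (orbitClosure_stable x)
      have h2 := sat_closed halg (orbitClosure_closed y) (orbitClosure_stable y)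
      rw [← h1, ← h2, hcl]
    exact Quotient.sound hoc
  -- soberness
  have hsober : QuasiSober (OrbSpace K R act) := by
    refine ⟨fun {C} hirr hclosed => ?_⟩
    set Z := orbMap K R act ⁻¹' C with hZ
    have hZc : IsClosed Z := hclosed.preimage hπc
    have hZs : GLStable K R act Z := stable_pi_preimage halg C
    have hCZ : orbMap K R act '' Z = C :=
      Set.image_preimage_eq C (orbMap_surjective (act := act))
    have hne : Z.Nonempty := by
      obtain ⟨c, hc⟩ := hirr.1
      obtain ⟨x, rfl⟩ := orbMap_surjective (act := act) c
      exact ⟨x, hc⟩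
    have hpre : IsPreirreducible Z := by
      rintro u v hu hv ⟨x, hxZ, hxu⟩ ⟨y, hyZ, hyv⟩
      obtain ⟨s1, ⟨f, rfl⟩, hxs1, hs1u⟩ :=
        PrimeSpectrum.isTopologicalBasis_basic_opens.exists_subset_of_mem_open hxu hu
      obtain ⟨s2, ⟨h, rfl⟩, hys2, hs2v⟩ :=
        PrimeSpectrum.isTopologicalBasis_basic_opens.exists_subset_of_mem_open hyv hv
      have hCf : (C ∩ BSet (act := act) f).Nonempty :=
        ⟨orbMap K R act x, hxZ, ⟨x, DSet_subset_WSet halg f hxs1, rfl⟩⟩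
      have hCh : (C ∩ BSet (act := act) h).Nonempty :=
        ⟨orbMap K R act y, hyZ, ⟨y, DSet_subset_WSet halg h hys2, rfl⟩⟩
      obtain ⟨c, hcC, hcf, hch⟩ :=
        hirr.2 _ _ (isOpen_BSet halg f) (isOpen_BSet halg h) hCf hCh
      obtain ⟨z, rfl⟩ := orbMap_surjective (act := act) c
      have hzZ : z ∈ Z := hcC
      have hzf : z ∈ WSet (act := act) f := by
        rw [← preimage_BSet halg]; exact hcf
      have hzh : z ∈ WSet (act := act) h := by
        rw [← preimage_BSet halg]; exact hch
      obtain ⟨k, hk, hkf, hkh⟩ := keyLemma halg z f h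
        ((mem_WSet_iff f z).mp hzf) ((mem_WSet_iff h z).mp hzh)
      refine ⟨pt K R act k z, mem_of_stable halg hZs hk hzZ, ?_, ?_⟩
      · apply hs1u
        show f ∉ (pt K R act k z).asIdeal
        rw [mem_pt]
        exact hkf
      · apply hs2v
        show h ∉ (pt K R act k z).asIdeal
        rw [mem_pt]
        exact hkh
    obtain ⟨ξ, hξ⟩ := QuasiSober.sober ⟨hne, hpre⟩ hZc
    have hξZ : ξ ∈ Z := by
      rw [← hξ]; exact subset_closure rfl
    have hocZ : orbitClosure K R act ξ = Z := by
      apply Set.eq_of_subset_of_subset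
      · exact orbitClosure_min hZc hZs hξZ
      · rw [← hξ]
        exact closure_minimal (Set.singleton_subset_iff.mpr (mem_orbitClosure_self ξ))
          (orbitClosure_closed ξ)
    exact ⟨orbMap K R act ξ, by rw [IsGenericPoint, closure_pi halg, hocZ, hCZ]⟩
  -- basis
  have hbasis : TopologicalSpace.IsTopologicalBasis
      {U : Set (OrbSpace K R act) | IsOpen U ∧ IsCompact U} := by
    apply TopologicalSpace.isTopologicalBasis_of_isOpen_of_nhds (fun u hu => hu.1)
    intro a u hau hu
    obtain ⟨x, rfl⟩ := orbMap_surjective (act := act) a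
    have hxu : x ∈ orbMap K R act ⁻¹' u := hau
    obtain ⟨s1, ⟨f, rfl⟩, hxs1, hs1u⟩ :=
      PrimeSpectrum.isTopologicalBasis_basic_opens.exists_subset_of_mem_open hxu
        (hu.preimage hπc)
    refine ⟨BSet (act := act) f, ⟨isOpen_BSet halg f, isCompact_BSet halg f⟩,
      ⟨x, DSet_subset_WSet halg f hxs1, rfl⟩, ?_⟩
    rintro b ⟨w, hw, rfl⟩
    obtain ⟨g, hg, hw'⟩ := Set.mem_iUnion₂.mp hw
    have : pt K R act g w ∈ orbMap K R act ⁻¹' u := hs1u hw'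
    have := Set.mem_preimage.mp this
    rwa [orbMap_pt halg hg] at this
  refine ⟨hsober, hT0, hbasis, ?_⟩
  -- intersections of quasi-compact opens
  have hWmul : ∀ f h : R,
      WSet (act := act) f ∩ WSet (act := act) h = WSet (act := act) (f * h) := by
    intro f h
    ext z
    simp only [Set.mem_inter_iff, mem_WSet_iff]
    constructor
    · rintro ⟨hf, hh⟩
      obtain ⟨k, hk, hkf, hkh⟩ := keyLemma halg z f h hf hh
      refine ⟨k, hk, ?_⟩
      rw [_root_.map_mul]
      intro hm
      rcases z.isPrime.mem_or_mem hm with hc | hc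
      · exact hkf hc
      · exact hkh hc
    · rintro ⟨k, hk, hkm⟩
      rw [_root_.map_mul] at hkm
      exact ⟨⟨k, hk, fun hc => hkm (Ideal.mul_mem_right _ _ hc)⟩,
        ⟨k, hk, fun hc => hkm (Ideal.mul_mem_left _ _ hc)⟩⟩
  have hBmul : ∀ f h : R,
      BSet (act := act) f ∩ BSet (act := act) h = BSet (act := act) (f * h) := by
    intro f h
    apply Set.eq_of_subset_of_subset
    · rintro a ⟨haf, hah⟩
      obtain ⟨z, hz, rfl⟩ := haf
      have hzh : z ∈ WSet (act := act) h := by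
        rw [← preimage_BSet halg]; exact hah
      exact ⟨z, (hWmul f h) ▸ Set.mem_inter hz hzh, rfl⟩
    · rw [BSet, ← hWmul]
      exact (Set.image_inter_subset _ _ _).trans
        (Set.inter_subset_inter (le_refl _) (le_refl _))
  have hcover : ∀ U : Set (OrbSpace K R act), IsOpen U → IsCompact U →
      ∃ s : Finset R, U = ⋃ f ∈ s, BSet (act := act) f := by
    intro U hU hUc
    classical
    have hmem : ∀ a ∈ U, ∃ f : R, a ∈ BSet (act := act) f ∧ BSet (act := act) f ⊆ U := by
      intro a ha
      obtain ⟨x, rfl⟩ := orbMap_surjective (act := act) a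
      obtain ⟨s1, ⟨f, rfl⟩, hxs1, hs1u⟩ :=
        PrimeSpectrum.isTopologicalBasis_basic_opens.exists_subset_of_mem_open
          (show x ∈ orbMap K R act ⁻¹' U from ha) (hU.preimage hπc)
      refine ⟨f, ⟨x, DSet_subset_WSet halg f hxs1, rfl⟩, ?_⟩
      rintro b ⟨w, hw, rfl⟩
      obtain ⟨g, hg, hw'⟩ := Set.mem_iUnion₂.mp hw
      have h2 : pt K R act g w ∈ orbMap K R act ⁻¹' U := hs1u hw'
      have h3 := Set.mem_preimage.mp h2
      rwa [orbMap_pt halg hg] at h3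
    have hsub : U ⊆ ⋃ t : {f : R // BSet (act := act) f ⊆ U}, BSet (act := act) (t : R) := by
      intro a ha
      obtain ⟨f, haf, hfU⟩ := hmem a ha
      exact Set.mem_iUnion.mpr ⟨⟨f, hfU⟩, haf⟩
    obtain ⟨t, ht⟩ := hUc.elim_finite_subcover _ (fun i => isOpen_BSet halg _) hsub
    refine ⟨t.image Subtype.val, ?_⟩
    apply Set.eq_of_subset_of_subset
    · intro a ha
      obtain ⟨i, hit, hai⟩ := Set.mem_iUnion₂.mp (ht ha)
      exact Set.mem_iUnion₂.mpr ⟨i.1, Finset.mem_image_of_mem _ hit, hai⟩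
    · intro a ha
      obtain ⟨f, hf, haf⟩ := Set.mem_iUnion₂.mp ha
      obtain ⟨i, hit, rfl⟩ := Finset.mem_image.mp hf
      exact i.2 haf
  intro U V hU hUc hV hVc
  obtain ⟨s, hs⟩ := hcover U hU hUc
  obtain ⟨s', hs'⟩ := hcover V hV hVc
  have hUV : U ∩ V = ⋃ f ∈ s, ⋃ h ∈ s', BSet (act := act) (f * h) := by
    rw [hs, hs']
    ext a
    simp only [Set.mem_inter_iff, Set.mem_iUnion, exists_prop]
    constructor
    · rintro ⟨⟨f, hf, haf⟩, ⟨h, hh, hah⟩⟩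
      exact ⟨f, hf, h, hh, (hBmul f h) ▸ Set.mem_inter haf hah⟩
    · rintro ⟨f, hf, h, hh, ha⟩
      rw [← hBmul] at ha
      exact ⟨⟨f, hf, ha.1⟩, ⟨h, hh, ha.2⟩⟩
  rw [hUV]
  apply s.isCompact_biUnion
  intro f _
  apply s'.isCompact_biUnion
  intro h _
  exact isCompact_BSet halg (f * h)
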